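/- The Halphen system ẋ_1 = x_3x_2 - x_1x_3 - x_1x_2, ẋ_2 = x_1x_3 - x_2x_1 - x_2x_3, ẋ_3 = x_2x_1 - x_3x_2 - x_3x_1 admits no nonconstant polynomial first integral: every polynomial F ∈ ℂ[x_1,x_2,x_3] satisfying (x_3x_2 - x_1x_3 - x_1x_2)∂F/∂x_1 + (x_1x_3 - x_2x_1 - x_2x_3)∂F/∂x_2 + (x_2x_1 - x_3x_2 - x_3x_1)∂F/∂x_3 = 0 is a constant. -/

import Mathlib

open MvPolynomial

noncomputable section HalphenAux
namespace Halphen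

/-- The Halphen vector field as an operator on `ℂ[x,y,z]`. -/
def D3 (F : MvPolynomial (Fin 3) ℂ) : MvPolynomial (Fin 3) ℂ :=
  (X 2 * X 1 - X 0 * X 2 - X 0 * X 1) * pderiv 0 F
    + (X 0 * X 2 - X 1 * X 0 - X 1 * X 2) * pderiv 1 F
    + (X 1 * X 0 - X 2 * X 1 - X 2 * X 0) * pderiv 2 F

/-- The restriction of the Halphen field to the invariant plane `x = y`. -/
def D2 (g : MvPolynomial (Fin 2) ℂ) : MvPolynomial (Fin 2) ℂ :=
  (- X 0 ^ 2) * pderiv 0 g + (X 0 ^ 2 - 2 * (X 0 * X 1)) * pderiv 1 g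

lemma D3_add (p q : MvPolynomial (Fin 3) ℂ) : D3 (p + q) = D3 p + D3 q := by
  simp only [D3, map_add]; ring

lemma D2_add (p q : MvPolynomial (Fin 2) ℂ) : D2 (p + q) = D2 p + D2 q := by
  simp only [D2, map_add]; ring

lemma D3_C (a : ℂ) : D3 (C a) = 0 := by simp only [D3, pderiv_C]; ring

lemma D2_C (a : ℂ) : D2 (C a) = 0 := by simp only [D2, pderiv_C]; ring

lemma D3_mul (p q : MvPolynomial (Fin 3) ℂ) : D3 (p * q) = D3 p * q + p * D3 q := by
  simp only [D3, pderiv_mul]; ring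

lemma D2_mul (p q : MvPolynomial (Fin 2) ℂ) : D2 (p * q) = D2 p * q + p * D2 q := by
  simp only [D2, pderiv_mul]; ring

lemma D3_sum {ι : Type*} (s : Finset ι) (f : ι → MvPolynomial (Fin 3) ℂ) :
    D3 (∑ i ∈ s, f i) = ∑ i ∈ s, D3 (f i) := by
  classical
  induction s using Finset.induction_on with
  | empty => simp [D3]
  | insert _ _ h ih => rw [Finset.sum_insert h, Finset.sum_insert h, D3_add, ih]

/-- The substitution `y := x`, mapping `ℂ[x,y,z]` onto `ℂ[x,z]`. -/
def σv : Fin 3 → Fin 2 := ![0, 0, 1]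

lemma rename_D3_X (i : Fin 3) : rename σv (D3 (X i)) = D2 (rename σv (X i)) := by
  fin_cases i <;>
    simp [D3, D2, σv, pderiv_X, Pi.single_apply, rename_X] <;> ring

lemma rename_D3 (F : MvPolynomial (Fin 3) ℂ) : rename σv (D3 F) = D2 (rename σv F) := by
  induction F using MvPolynomial.induction_on with
  | C a => rw [D3_C, map_zero, rename_C, D2_C]
  | add p q hp hq => rw [D3_add, map_add, hp, hq, map_add, D2_add]
  | mul_X p i hp =>
      rw [D3_mul, map_add, map_mul, map_mul, hp, rename_D3_X, map_mul, D2_mul]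

/-- Euler's identity for homogeneous polynomials in two variables. -/
lemma euler2 {n : ℕ} {g : MvPolynomial (Fin 2) ℂ} (hg : g.IsHomogeneous n) :
    X 0 * pderiv 0 g + X 1 * pderiv 1 g = C (n : ℂ) * g := by
  have key : ∀ v ∈ g.support, ∀ c : ℂ,
      X (0 : Fin 2) * pderiv 0 (monomial v c) + X 1 * pderiv 1 (monomial v c)
        = C (n : ℂ) * monomial v c := by
    intro v hv c
    have hdeg : v.degree = n := by
      have := hg (mem_support_iff.mp hv)
      rw [Finsupp.degree_eq_weight_one]; exact this
    have hterm : ∀ i : Fin 2, (X i : MvPolynomial (Fin 2) ℂ) * pderiv i (monomial v c)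
        = monomial v (c * (v i : ℂ)) := by
      intro i
      rw [pderiv_monomial]
      rcases Nat.eq_zero_or_pos (v i) with h0 | hpos
      · simp [h0]
      · have hle : Finsupp.single i 1 ≤ v := by
          rw [Finsupp.single_le_iff]; exact hpos
        rw [X, monomial_mul, one_mul, add_tsub_cancel_of_le hle]
    rw [hterm 0, hterm 1, ← map_add, C_mul_monomial]
    congr 1
    have hsum : (v 0 : ℂ) + (v 1 : ℂ) = (n : ℂ) := by
      have : v 0 + v 1 = n := by
        rw [← hdeg]; show _ = ∑ i ∈ v.support, v i
        rw [show (∑ i ∈ v.support, v i) = ∑ i : Fin 2, v i from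
          Finset.sum_subset (Finset.subset_univ _)
            (fun i _ hi => Finsupp.notMem_support_iff.mp hi)]
        rw [Fin.sum_univ_two]
      exact_mod_cast congrArg (Nat.cast : ℕ → ℂ) this
    rw [← hsum]; ring
  conv_lhs => rw [g.as_sum, map_sum, map_sum, Finset.mul_sum, Finset.mul_sum,
    ← Finset.sum_add_distrib]
  conv_rhs => rw [g.as_sum, Finset.mul_sum]
  exact Finset.sum_congr rfl fun v hv => key v hv _

/-- Dehomogenization `ℂ[x,z] → ℂ[t]`, `x ↦ t`, `z ↦ 1`. -/
def φh : MvPolynomial (Fin 2) ℂ →ₐ[ℂ] Polynomial ℂ := aeval ![Polynomial.X, 1]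

@[simp] lemma φh_X0 : φh (X 0) = Polynomial.X := by simp [φh]
@[simp] lemma φh_X1 : φh (X 1) = 1 := by simp [φh]

@[simp] lemma φh_C (a : ℂ) : φh (MvPolynomial.C a) = Polynomial.C a := by
  simp [φh, algebraMap_eq]

lemma φh_derivative (g : MvPolynomial (Fin 2) ℂ) :
    Polynomial.derivative (φh g) = φh (pderiv 0 g) := by
  induction g using MvPolynomial.induction_on with
  | C a => simp [pderiv_C]
  | add p q hp hq => simp [map_add, hp, hq]
  | mul_X p i hp =>
      rw [pderiv_mul, map_mul, Polynomial.derivative_mul, map_add, map_mul, hp]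
      congr 1
      fin_cases i <;> simp [pderiv_X]

lemma φh_monomial (v : Fin 2 →₀ ℕ) (c : ℂ) :
    φh (monomial v c) = Polynomial.C c * Polynomial.X ^ (v 0) := by
  rw [φh, aeval_monomial]
  rw [Finsupp.prod_pow]
  simp [Fin.prod_univ_two, Polynomial.algebraMap_eq]

lemma degree_apply_le {n : ℕ} {g : MvPolynomial (Fin 2) ℂ} (hg : g.IsHomogeneous n)
    (v : Fin 2 →₀ ℕ) (hv : v ∈ g.support) : v 0 ≤ n ∧ v 0 + v 1 = n := by
  have hdeg : v.degree = n := by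
    have := hg (mem_support_iff.mp hv)
    rw [Finsupp.degree_eq_weight_one]; exact this
  have hsum : v 0 + v 1 = n := by
    rw [← hdeg]; show _ = ∑ i ∈ v.support, v i
    rw [show (∑ i ∈ v.support, v i) = ∑ i : Fin 2, v i from
      Finset.sum_subset (Finset.subset_univ _)
        (fun i _ hi => Finsupp.notMem_support_iff.mp hi)]
    rw [Fin.sum_univ_two]
  exact ⟨le_trans (Nat.le_add_right _ _) hsum.le, hsum⟩

lemma natDegree_φh_le {n : ℕ} {g : MvPolynomial (Fin 2) ℂ} (hg : g.IsHomogeneous n) :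
    (φh g).natDegree ≤ n := by
  conv_lhs => rw [g.as_sum, map_sum]
  refine Polynomial.natDegree_sum_le_of_forall_le _ _ fun v hv => ?_
  rw [φh_monomial]
  refine le_trans (Polynomial.natDegree_mul_le) ?_
  simp only [Polynomial.natDegree_C, Polynomial.natDegree_X_pow, zero_add]
  exact (degree_apply_le hg v hv).1

lemma φh_injective {n : ℕ} {g : MvPolynomial (Fin 2) ℂ} (hg : g.IsHomogeneous n)
    (h : φh g = 0) : g = 0 := by
  by_contra hne
  obtain ⟨v, hv⟩ : ∃ v, v ∈ g.support := (support_nonempty.mpr hne)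
  have hco : (φh g).coeff (v 0) = coeff v g := by
    conv_lhs => rw [g.as_sum, map_sum]
    rw [Polynomial.finset_sum_coeff]
    rw [Finset.sum_eq_single v]
    · rw [φh_monomial]; simp
    · intro w hw hwv
      rw [φh_monomial]
      simp only [Polynomial.coeff_C_mul, Polynomial.coeff_X_pow]
      rw [if_neg, mul_zero]
      intro hwv0
      apply hwv
      have h1 := (degree_apply_le hg v hv).2
      have h2 := (degree_apply_le hg w hw).2
      have hw1 : w 1 = v 1 := by omega
      ext i
      match i with
      | 0 => exact hwv0.symm
      | 1 => exact hw1
    · intro habs; exact absurd hv habs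
  rw [h, Polynomial.coeff_zero] at hco
  exact (mem_support_iff.mp hv) hco.symm

section TwoD
open Polynomial in
lemma twoD {m A B : ℕ} {g : MvPolynomial (Fin 2) ℂ} (hg : g.IsHomogeneous m)
    (heq : D2 g = (MvPolynomial.C (A : ℂ) * X 0 + MvPolynomial.C (B : ℂ) * X 1) * g)
    (hpos : 1 ≤ m + A + B) : g = 0 := by
  by_contra hne
  set P : Polynomial ℂ := φh g with hPdef
  have hPne : P ≠ 0 := fun h => hne (φh_injective hg h)
  have pd0 : φh (pderiv 0 g) = derivative P := (φh_derivative g).symm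
  have pd1 : φh (pderiv 1 g) = Polynomial.C (m : ℂ) * P - Polynomial.X * derivative P := by
    have e1 := congrArg φh (euler2 hg)
    simp only [map_add, map_mul, φh_X0, φh_X1, one_mul, pd0, φh_C] at e1
    linear_combination e1
  have main : (- Polynomial.X ^ 2) * derivative P
      + (Polynomial.X ^ 2 - 2 * (Polynomial.X * 1)) * (Polynomial.C (m : ℂ) * P - Polynomial.X * derivative P)
      = (Polynomial.C (A : ℂ) * Polynomial.X + Polynomial.C (B : ℂ) * 1) * P := by
    have e2 := congrArg φh heq
    simp only [D2, map_add, map_mul, map_sub, map_neg, map_pow, map_ofNat, φh_X0, φh_X1,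
      pd0, pd1, φh_C] at e2
    linear_combination e2
  obtain ⟨Q, hQ, hndvd⟩ := P.exists_eq_pow_rootMultiplicity_mul_and_not_dvd hPne 0
  set s := P.rootMultiplicity 0 with hs
  rw [Polynomial.C_0, sub_zero] at hQ hndvd
  have hQ0 : Q.coeff 0 ≠ 0 := fun h => hndvd (X_dvd_iff.mpr h)
  have hQne : Q ≠ 0 := fun h => hQ0 (by simp [h])
  have hQeval : Q.eval 0 ≠ 0 := by rwa [← coeff_zero_eq_eval_zero]
  have hnatle : P.natDegree ≤ m := natDegree_φh_le hg
  have hsle : s ≤ m := by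
    have : P.natDegree = s + Q.natDegree := by
      rw [hQ, natDegree_mul (pow_ne_zero _ X_ne_zero) hQne, natDegree_X_pow]
    omega
  rcases Nat.eq_zero_or_pos s with hs0 | hspos
  · -- s = 0 : P = Q
    rw [hs0, pow_zero, one_mul] at hQ
    rw [hQ] at main
    have hB : (B : ℂ) = 0 := by
      have h0 := congrArg (Polynomial.eval 0) main
      simp only [Polynomial.eval_add, Polynomial.eval_mul, Polynomial.eval_sub,
        Polynomial.eval_neg, Polynomial.eval_pow, Polynomial.eval_X, Polynomial.eval_C,
        Polynomial.eval_one, Polynomial.eval_ofNat, mul_one, one_mul] at h0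
      have : (B : ℂ) * Q.eval 0 = 0 := by linear_combination -h0
      exact (mul_eq_zero.mp this).resolve_right hQeval
    have key : Polynomial.X * (-(Polynomial.X * derivative Q)
          + (Polynomial.X - 2) * (Polynomial.C (m : ℂ) * Q - Polynomial.X * derivative Q))
        = Polynomial.X * (Polynomial.C (A : ℂ) * Q) := by
      have hB' : (Polynomial.C (B : ℂ)) = (0 : Polynomial ℂ) := by rw [hB, map_zero]
      linear_combination main + Q * hB'
    have key2 := mul_left_cancel₀ Polynomial.X_ne_zero key
    have h1 := congrArg (Polynomial.eval 0) key2
    simp only [Polynomial.eval_add, Polynomial.eval_mul, Polynomial.eval_sub,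
      Polynomial.eval_neg, Polynomial.eval_pow, Polynomial.eval_X, Polynomial.eval_C,
      Polynomial.eval_one, Polynomial.eval_ofNat, mul_one, one_mul] at h1
    have h2 : ((2 * m + A : ℕ) : ℂ) * Q.eval 0 = 0 := by push_cast; linear_combination -h1
    have h3 : ((2 * m + A : ℕ) : ℂ) = 0 := (mul_eq_zero.mp h2).resolve_right hQeval
    have h4 : 2 * m + A = 0 := Nat.cast_eq_zero.mp h3
    have h5 : B = 0 := Nat.cast_eq_zero.mp hB
    omega
  · obtain ⟨r, hr⟩ : ∃ r, s = r + 1 := ⟨s - 1, by omega⟩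
    rw [hQ, hr, Polynomial.derivative_mul, Polynomial.derivative_X_pow, Nat.add_sub_cancel]
      at main
    have key : Polynomial.X ^ (r + 1) *
        (-(Polynomial.C ((r : ℂ) + 1) * Polynomial.X * Q) - Polynomial.X ^ 2 * derivative Q
          + (Polynomial.X ^ 2 - 2 * Polynomial.X) * (Polynomial.C (m : ℂ) * Q)
          - (Polynomial.X ^ 2 - 2 * Polynomial.X) * (Polynomial.C ((r : ℂ) + 1) * Q)
          - (Polynomial.X ^ 2 - 2 * Polynomial.X) * (Polynomial.X * derivative Q))
        = Polynomial.X ^ (r + 1) *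
          ((Polynomial.C (A : ℂ) * Polynomial.X + Polynomial.C (B : ℂ)) * Q) := by
      push_cast at main
      linear_combination main
    have hU := mul_left_cancel₀ (pow_ne_zero (r + 1) Polynomial.X_ne_zero) key
    have hB : (B : ℂ) = 0 := by
      have h0 := congrArg (Polynomial.eval 0) hU
      simp only [Polynomial.eval_add, Polynomial.eval_mul, Polynomial.eval_sub,
        Polynomial.eval_neg, Polynomial.eval_pow, Polynomial.eval_X, Polynomial.eval_C,
        Polynomial.eval_one, Polynomial.eval_ofNat, mul_one, one_mul] at h0
      have : (B : ℂ) * Q.eval 0 = 0 := by linear_combination -h0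
      exact (mul_eq_zero.mp this).resolve_right hQeval
    have hB' : (Polynomial.C (B : ℂ)) = (0 : Polynomial ℂ) := by rw [hB, map_zero]
    have key2 : Polynomial.X *
        (-(Polynomial.C ((r : ℂ) + 1) * Q) - Polynomial.X * derivative Q
          + (Polynomial.X - 2) * (Polynomial.C (m : ℂ) * Q)
          - (Polynomial.X - 2) * (Polynomial.C ((r : ℂ) + 1) * Q)
          - (Polynomial.X - 2) * (Polynomial.X * derivative Q))
        = Polynomial.X * (Polynomial.C (A : ℂ) * Q) := by
      linear_combination hU + Q * hB'
    have hU1 := mul_left_cancel₀ Polynomial.X_ne_zero key2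
    have h1 := congrArg (Polynomial.eval 0) hU1
    simp only [Polynomial.eval_add, Polynomial.eval_mul, Polynomial.eval_sub,
      Polynomial.eval_neg, Polynomial.eval_pow, Polynomial.eval_X, Polynomial.eval_C,
      Polynomial.eval_one, Polynomial.eval_ofNat, mul_one, one_mul] at h1
    have h2 : ((r + 1 : ℕ) : ℂ) * Q.eval 0 = ((2 * m + A : ℕ) : ℂ) * Q.eval 0 := by
      push_cast; linear_combination h1
    have h3 : r + 1 = 2 * m + A :=
      Nat.cast_injective (mul_right_cancel₀ hQeval h2)
    omega
end TwoD

lemma X01_ne_zero : (X 0 - X 1 : MvPolynomial (Fin 3) ℂ) ≠ 0 := by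
  intro h
  have h2 := congrArg (coeff (Finsupp.single (0 : Fin 3) 1)) h
  classical
  rw [coeff_sub, coeff_X', coeff_X', if_pos rfl, if_neg (by
    intro hss
    have := DFunLike.congr_fun hss (0 : Fin 3)
    simp [Finsupp.single_apply] at this), coeff_zero] at h2
  norm_num at h2

lemma eval_finSuccEquiv (G : MvPolynomial (Fin 3) ℂ) :
    Polynomial.eval (X 0 : MvPolynomial (Fin 2) ℂ) (finSuccEquiv ℂ 2 G) = rename σv G := by
  induction G using MvPolynomial.induction_on with
  | C a => simp [finSuccEquiv_apply]
  | add p q hp hq => simp only [map_add, Polynomial.eval_add, hp, hq]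
  | mul_X p i hp =>
      rw [map_mul, Polynomial.eval_mul, hp, map_mul]
      refine congrArg (rename σv p * ·) ?_
      fin_cases i
      · rw [show ((⟨0, by norm_num⟩ : Fin 3)) = 0 from rfl, finSuccEquiv_X_zero]
        simp [σv, rename_X]
      · rw [show ((⟨1, by norm_num⟩ : Fin 3)) = (0 : Fin 2).succ from rfl, finSuccEquiv_X_succ]
        simp [σv, rename_X]
      · rw [show ((⟨2, by norm_num⟩ : Fin 3)) = (1 : Fin 2).succ from rfl, finSuccEquiv_X_succ]
        simp [σv, rename_X]

lemma dvd_of_rename_eq_zero {G : MvPolynomial (Fin 3) ℂ} (h : rename σv G = 0) :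
    ∃ G1, G = (X 0 - X 1) * G1 := by
  have hroot : Polynomial.IsRoot (finSuccEquiv ℂ 2 G) (X 0) :=
    (eval_finSuccEquiv G).trans h
  obtain ⟨q, hq⟩ := Polynomial.dvd_iff_isRoot.mpr hroot
  refine ⟨(finSuccEquiv ℂ 2).symm q, ?_⟩
  apply (finSuccEquiv ℂ 2).injective
  rw [map_mul, AlgEquiv.apply_symm_apply, map_sub, finSuccEquiv_X_zero,
    show (X 1 : MvPolynomial (Fin 3) ℂ) = X (0 : Fin 2).succ from rfl, finSuccEquiv_X_succ, hq]

lemma isHomogeneous_of_mul_X01 {n : ℕ} {h : MvPolynomial (Fin 3) ℂ}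
    (hw : ((X 0 - X 1 : MvPolynomial (Fin 3) ℂ) * h).IsHomogeneous (n + 1)) :
    h.IsHomogeneous n := by
  have hWh : (X 0 - X 1 : MvPolynomial (Fin 3) ℂ).IsHomogeneous 1 :=
    (isHomogeneous_X ℂ 0).sub (isHomogeneous_X ℂ 1)
  have hcomp : ∀ j, j ≠ n → homogeneousComponent j h = 0 := by
    intro j hjn
    have h1 : (X 0 - X 1 : MvPolynomial (Fin 3) ℂ) * homogeneousComponent j h = 0 := by
      have hsum : (X 0 - X 1 : MvPolynomial (Fin 3) ℂ) * h
          = ∑ i ∈ Finset.range (h.totalDegree + 1),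
              (X 0 - X 1 : MvPolynomial (Fin 3) ℂ) * homogeneousComponent i h := by
        rw [← Finset.mul_sum, sum_homogeneousComponent]
      have h2 := congrArg (homogeneousComponent (1 + j)) hsum
      rw [homogeneousComponent_of_mem ((mem_homogeneousSubmodule _ _).mpr hw),
        if_neg (by omega), map_sum] at h2
      rw [Finset.sum_eq_single j (fun i _ hij => by
          rw [homogeneousComponent_of_mem ((mem_homogeneousSubmodule _ _).mpr
            (hWh.mul (homogeneousComponent_isHomogeneous i h))), if_neg (by omega)])
        (fun hj => by
          rw [homogeneousComponent_eq_zero j h (by simpa using hj), mul_zero, map_zero])] at h2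
      rw [homogeneousComponent_of_mem ((mem_homogeneousSubmodule _ _).mpr
        (hWh.mul (homogeneousComponent_isHomogeneous j h))), if_pos rfl] at h2
      exact h2.symm
    exact (mul_eq_zero.mp h1).resolve_left X01_ne_zero
  have hh : h = homogeneousComponent n h := by
    conv_lhs => rw [← sum_homogeneousComponent h]
    exact Finset.sum_eq_single n (fun i _ hij => hcomp i hij)
      (fun hn => homogeneousComponent_eq_zero _ _ (by simpa using hn))
  rw [hh]
  exact homogeneousComponent_isHomogeneous n h

lemma isHomogeneous_pderiv {n : ℕ} {p : MvPolynomial (Fin 3) ℂ}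
    (hp : p.IsHomogeneous (n + 1)) (i : Fin 3) : (pderiv i p).IsHomogeneous n := by
  rw [p.as_sum, map_sum]
  apply IsHomogeneous.sum
  intro v hv
  rw [pderiv_monomial]
  rcases Nat.eq_zero_or_pos (v i) with h0 | hpos
  · rw [h0]
    simpa using isHomogeneous_zero (Fin 3) ℂ n
  · apply isHomogeneous_monomial
    have hvd : v.degree = n + 1 := by
      have := hp (mem_support_iff.mp hv)
      rw [Finsupp.degree_eq_weight_one]; exact this
    have hle : Finsupp.single i 1 ≤ v := Finsupp.single_le_iff.mpr hpos
    have hadd : (v - Finsupp.single i 1) + Finsupp.single i 1 = v := tsub_add_cancel_of_le hle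
    have hdeg_add : ∀ x y : Fin 3 →₀ ℕ, (x + y).degree = x.degree + y.degree := by
      intro x y
      simp [Finsupp.degree_eq_weight_one, map_add]
    have hsingle : (Finsupp.single i 1).degree = 1 := by
      exact Finsupp.degree_single i 1
    have hv2 := congrArg Finsupp.degree hadd
    rw [hdeg_add, hsingle] at hv2
    omega

lemma isHomogeneous_D3 {n : ℕ} {p : MvPolynomial (Fin 3) ℂ} (hp : p.IsHomogeneous n) :
    (D3 p).IsHomogeneous (n + 1) := by
  cases n with
  | zero =>
    have h1 : homogeneousComponent 0 p = p := by
      rw [homogeneousComponent_of_mem ((mem_homogeneousSubmodule _ _).mpr hp), if_pos rfl]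
    have hpc : p = C (coeff 0 p) := by rw [← homogeneousComponent_zero, h1]
    rw [hpc, D3_C]
    exact isHomogeneous_zero _ _ _
  | succ k =>
    have h2 : ∀ i j : Fin 3, ((X i * X j : MvPolynomial (Fin 3) ℂ)).IsHomogeneous 2 :=
      fun i j => by simpa using (isHomogeneous_X ℂ i).mul (isHomogeneous_X ℂ j)
    have hd : ∀ i : Fin 3, (pderiv i p).IsHomogeneous k := fun i => isHomogeneous_pderiv hp i
    have hmul : ∀ (q : MvPolynomial (Fin 3) ℂ) (i : Fin 3), q.IsHomogeneous 2 →
        (q * pderiv i p).IsHomogeneous (k + 1 + 1) := by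
      intro q i hq
      have := hq.mul (hd i)
      rwa [show 2 + k = k + 1 + 1 by omega] at this
    exact ((hmul _ 0 (((h2 2 1).sub (h2 0 2)).sub (h2 0 1))).add
      (hmul _ 1 (((h2 0 2).sub (h2 1 0)).sub (h2 1 2)))).add
      (hmul _ 2 (((h2 1 0).sub (h2 2 1)).sub (h2 2 0)))

lemma threeD (d : ℕ) : ∀ (a b c : ℕ) (G : MvPolynomial (Fin 3) ℂ), G.IsHomogeneous d →
    D3 G = (C (a : ℂ) * X 0 + C (b : ℂ) * X 1 + C (c : ℂ) * X 2) * G →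
    1 ≤ d + a + b + c → G = 0 := by
  induction d using Nat.strong_induction_on with
  | _ d IH =>
  intro a b c G hG heq hpos
  cases d with
  | zero =>
    have h1 : homogeneousComponent 0 G = G := by
      rw [homogeneousComponent_of_mem ((mem_homogeneousSubmodule _ _).mpr hG), if_pos rfl]
    have hGC : G = C (coeff 0 G) := by rw [← homogeneousComponent_zero, h1]
    by_contra hne
    have hc0 : coeff 0 G ≠ 0 := fun h => hne (by rw [hGC, h, map_zero])
    rw [hGC, D3_C] at heq
    have hL : (C (a : ℂ) * X 0 + C (b : ℂ) * X 1 + C (c : ℂ) * X 2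
        : MvPolynomial (Fin 3) ℂ) = 0 := by
      rcases mul_eq_zero.mp heq.symm with h | h
      · exact h
      · exact absurd (by simpa using h) hc0
    have hcoe : ∀ i : Fin 3, coeff (Finsupp.single i 1)
        ((C (a : ℂ) * X 0 + C (b : ℂ) * X 1 + C (c : ℂ) * X 2 : MvPolynomial (Fin 3) ℂ)) = 0 :=
      fun i => by rw [hL, coeff_zero]
    classical
    have hsne : ∀ i j : Fin 3, i ≠ j → Finsupp.single i (1:ℕ) ≠ Finsupp.single j 1 := by
      intro i j hij hss
      have h3 := DFunLike.congr_fun hss i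
      rw [Finsupp.single_apply, Finsupp.single_apply, if_pos rfl,
        if_neg (fun h => hij h.symm)] at h3
      exact one_ne_zero h3
    have ha := hcoe 0
    rw [coeff_add, coeff_add, coeff_C_mul, coeff_C_mul, coeff_C_mul, coeff_X', coeff_X', coeff_X',
      if_pos rfl, if_neg (hsne 1 0 (by decide)), if_neg (hsne 2 0 (by decide))] at ha
    have hb := hcoe 1
    rw [coeff_add, coeff_add, coeff_C_mul, coeff_C_mul, coeff_C_mul, coeff_X', coeff_X', coeff_X',
      if_neg (hsne 0 1 (by decide)), if_pos rfl, if_neg (hsne 2 1 (by decide))] at hb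
    have hc := hcoe 2
    rw [coeff_add, coeff_add, coeff_C_mul, coeff_C_mul, coeff_C_mul, coeff_X', coeff_X', coeff_X',
      if_neg (hsne 0 2 (by decide)), if_neg (hsne 1 2 (by decide)), if_pos rfl] at hc
    have ha' : a = 0 := by exact_mod_cast (by simpa using ha : (a : ℂ) = 0)
    have hb' : b = 0 := by exact_mod_cast (by simpa using hb : (b : ℂ) = 0)
    have hc' : c = 0 := by exact_mod_cast (by simpa using hc : (c : ℂ) = 0)
    omega
  | succ e =>
    have hren : rename σv G = 0 := by
      refine twoD (m := e + 1) (A := a + b) (B := c) hG.rename_isHomogeneous ?_ (by omega)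
      rw [← rename_D3, heq]
      push_cast
      simp only [map_add, map_mul, rename_C, rename_X]
      rw [show σv 0 = 0 from rfl, show σv 1 = 0 from rfl, show σv 2 = 1 from rfl]
      ring
    obtain ⟨G1, hG1⟩ := dvd_of_rename_eq_zero hren
    have hG1h : G1.IsHomogeneous e := isHomogeneous_of_mul_X01 (hG1 ▸ hG)
    have hW : D3 (X 0 - X 1 : MvPolynomial (Fin 3) ℂ)
        = (-2) * X 2 * (X 0 - X 1) := by
      simp only [D3, map_sub, pderiv_X]
      simp [Pi.single_apply]
      ring
    have heq2 : D3 ((X 0 - X 1) * G1)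
        = (C (a : ℂ) * X 0 + C (b : ℂ) * X 1 + C (c : ℂ) * X 2) * ((X 0 - X 1) * G1) := by
      rw [← hG1]; exact heq
    rw [D3_mul, hW] at heq2
    have heq3 : (X 0 - X 1 : MvPolynomial (Fin 3) ℂ) * (D3 G1
        - (C (a : ℂ) * X 0 + C (b : ℂ) * X 1 + (C (c : ℂ) + 2) * X 2) * G1)
        = 0 := by
      linear_combination heq2
    have hC2 : (C (((c + 2 : ℕ)) : ℂ) : MvPolynomial (Fin 3) ℂ) = C ((c : ℂ)) + 2 := by
      rw [show (((c + 2 : ℕ)) : ℂ) = (c : ℂ) + 2 by push_cast; ring, map_add, map_ofNat]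
    have heq4 : D3 G1 = (C (a : ℂ) * X 0 + C (b : ℂ) * X 1 + C (((c + 2 : ℕ)) : ℂ) * X 2) * G1 := by
      have h5 := sub_eq_zero.mp ((mul_eq_zero.mp heq3).resolve_left X01_ne_zero)
      rw [hC2]
      linear_combination h5
    have hzero := IH e (by omega) a b (c + 2) G1 hG1h heq4 (by omega)
    rw [hG1, hzero, mul_zero]

lemma D3_zero : D3 0 = 0 := by simpa using D3_C 0

lemma hcD3 (F : MvPolynomial (Fin 3) ℂ) (n : ℕ) :
    D3 (homogeneousComponent (n + 1) F) = homogeneousComponent (n + 2) (D3 F) := by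
  conv_rhs => rw [← sum_homogeneousComponent F, D3_sum, map_sum]
  rw [Finset.sum_eq_single (n + 1)
    (fun i _ hi => by
      rw [homogeneousComponent_of_mem ((mem_homogeneousSubmodule _ _).mpr
        (isHomogeneous_D3 (homogeneousComponent_isHomogeneous i F))), if_neg (by omega)])
    (fun h2 => by
      rw [homogeneousComponent_eq_zero (n + 1) F (Nat.lt_succ_of_le (by simpa using h2)), D3_zero, map_zero]),
    homogeneousComponent_of_mem ((mem_homogeneousSubmodule _ _).mpr
      (isHomogeneous_D3 (homogeneousComponent_isHomogeneous (n + 1) F))), if_pos rfl]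

end Halphen
end HalphenAux

open Halphen in
/-- Corollary 3: the Halphen equations admit no nonconstant polynomial first
integral. -/
theorem halphen_no_polynomial_first_integral
    (F : MvPolynomial (Fin 3) ℂ)
    (hF : (X 2 * X 1 - X 0 * X 2 - X 0 * X 1) * pderiv 0 F
        + (X 0 * X 2 - X 1 * X 0 - X 1 * X 2) * pderiv 1 F
        + (X 1 * X 0 - X 2 * X 1 - X 2 * X 0) * pderiv 2 F = 0) :
    ∃ c : ℂ, F = C c := by
  have hD : Halphen.D3 F = 0 := hF
  have hcomp : ∀ n : ℕ, homogeneousComponent (n + 1) F = 0 := by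
    intro n
    refine Halphen.threeD (n + 1) 0 0 0 _ (homogeneousComponent_isHomogeneous _ F) ?_ (by omega)
    rw [Halphen.hcD3, hD, map_zero]
    simp
  refine ⟨coeff 0 F, ?_⟩
  conv_lhs => rw [← sum_homogeneousComponent F]
  rw [Finset.sum_eq_single 0
    (fun i _ hi => by
      obtain ⟨k, rfl⟩ : ∃ k, i = k + 1 := ⟨i - 1, by omega⟩
      exact hcomp k)
    (fun h0 => absurd (Finset.mem_range.mpr (Nat.succ_pos _)) h0),
    homogeneousComponent_zero]
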